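/- arXiv:2605.11983 — 2 statements merged into one kernel-verified Lean document; each statement's English description precedes it below -/
import Mathlib

section
/- Greedy farthest-first traversal is a 2-approximation for metric k-center: Let (V, d) be a finite metric space and k ≤ |V|. Let A ⊆ V with |A| = k be produced by farthest-first traversal (start from an arbitrary point; repeatedly add the point of V farthest from the current set). Then the coverage radius r_A = max_{u∈V} min_{v∈A} d(u,v) satisfies r_A ≤ 2 r*, where r* = min over all C ⊆ V with |C| = k of max_{u∈V} min_{v∈C} d(u,v). -/
open Finset

theorem farthest_first_two_approx {V : Type*} [MetricSpace V] [Fintype V] [Nonempty V]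
    (k : ℕ) (hk : 1 ≤ k) (hk' : k ≤ Fintype.card V)
    (a : Fin k → V)
    -- farthest-first traversal: each `a i` maximizes the distance to the previous points
    (hgreedy : ∀ i : Fin k, ∀ u : V,
      ((Finset.univ.filter (fun j => j < i)).inf fun j => edist u (a j)) ≤
        ((Finset.univ.filter (fun j => j < i)).inf fun j => edist (a i) (a j))) :
    ∀ C : Finset V, C.card = k →
      (Finset.univ.sup fun u => Finset.univ.inf fun i => edist u (a i)) ≤
        2 * Finset.univ.sup fun u => C.inf fun v => edist u v := by
  intro C hC
  set R := Finset.univ.sup fun u => C.inf fun v => edist u v with hR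
  rw [Finset.sup_le_iff]
  intro u _
  by_contra h
  push_neg at h
  set r := Finset.univ.inf fun i => edist u (a i) with hr
  have hCne : C.Nonempty := Finset.card_pos.mp (hC ▸ hk)
  have hnear : ∀ x : V, ∃ v ∈ C, edist x v ≤ R := by
    intro x
    obtain ⟨v, hv, hveq⟩ := Finset.exists_mem_eq_inf C hCne (fun v => edist x v)
    exact ⟨v, hv, hveq ▸ Finset.le_sup (f := fun u => C.inf fun v => edist u v) (Finset.mem_univ x)⟩
  choose c hcC hcle using fun i => hnear (a i)
  obtain ⟨cu, hcuC, hcule⟩ := hnear u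
  have h1 : ∀ i : Fin k, r ≤ edist u (a i) := fun i => Finset.inf_le (Finset.mem_univ i)
  have h2 : ∀ i j : Fin k, j < i → r ≤ edist (a i) (a j) := by
    intro i j hji
    calc r ≤ (Finset.univ.filter (fun j => j < i)).inf fun j => edist u (a j) :=
          Finset.inf_mono (Finset.filter_subset _ _)
      _ ≤ (Finset.univ.filter (fun j => j < i)).inf fun j => edist (a i) (a j) := hgreedy i u
      _ ≤ edist (a i) (a j) := Finset.inf_le (by simp [hji])
  have key : r ≤ 2 * R := by
    by_cases hinj : Function.Injective c
    · have hsurj : Function.Surjective (fun i : Fin k => (⟨c i, hcC i⟩ : C)) := by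
        have hinj' : Function.Injective (fun i : Fin k => (⟨c i, hcC i⟩ : C)) := by
          intro i j hij
          exact hinj (congrArg Subtype.val hij)
        have hcard : Fintype.card (Fin k) = Fintype.card C := by
          simp [Fintype.card_coe, hC]
        exact ((Fintype.bijective_iff_injective_and_card _).mpr ⟨hinj', hcard⟩).2
      obtain ⟨i, hi⟩ := hsurj ⟨cu, hcuC⟩
      have hcieq : c i = cu := congrArg Subtype.val hi
      calc r ≤ edist u (a i) := h1 i
        _ ≤ edist u cu + edist cu (a i) := edist_triangle _ _ _
        _ ≤ R + R := add_le_add hcule (by rw [← hcieq, edist_comm]; exact hcle i)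
        _ = 2 * R := (two_mul R).symm
    · obtain ⟨i, j, hij, hne⟩ : ∃ i j, c i = c j ∧ i ≠ j := by
        simp only [Function.Injective, not_forall] at hinj
        obtain ⟨i, j, h1', h2'⟩ := hinj
        exact ⟨i, j, h1', h2'⟩
      rcases hne.lt_or_gt with hlt | hlt
      · calc r ≤ edist (a j) (a i) := h2 j i hlt
          _ ≤ edist (a j) (c j) + edist (c i) (a i) := by
              rw [hij]; exact edist_triangle _ _ _
          _ ≤ R + R := add_le_add (hcle j) (by rw [edist_comm]; exact hcle i)
          _ = 2 * R := (two_mul R).symm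
      · calc r ≤ edist (a i) (a j) := h2 i j hlt
          _ ≤ edist (a i) (c i) + edist (c j) (a j) := by
              rw [← hij]; exact edist_triangle _ _ _
          _ ≤ R + R := add_le_add (hcle i) (by rw [edist_comm]; exact hcle j)
          _ = 2 * R := (two_mul R).symm
  exact absurd key (not_le.mpr h)
end

section
/- In the farthest-first traversal on a finite metric space, if the algorithm is run to select k+1 points a₁,…,a_{k+1}, then any two selected points are at distance at least r_A apart, where r_A is the coverage radius of the first k points. Consequently, with k+1 points that are pairwise at distance ≥ r_A and only k optimal centers, two of these points share a center, yielding r_A ≤ 2 r* by the triangle inequality. -/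
open Finset

theorem farthest_first_separation {V : Type*} [MetricSpace V] [Fintype V] [Nonempty V]
    (k : ℕ) (hk : 1 ≤ k) (hk' : k + 1 ≤ Fintype.card V)
    (a : Fin (k + 1) → V)
    -- farthest-first traversal run to select `k+1` points
    (hgreedy : ∀ i : Fin (k + 1), ∀ u : V,
      ((Finset.univ.filter (fun j => j < i)).inf fun j => edist u (a j)) ≤
        ((Finset.univ.filter (fun j => j < i)).inf fun j => edist (a i) (a j))) :
    -- coverage radius of the first `k` points
    (∀ i j : Fin (k + 1), i ≠ j →
      (Finset.univ.sup fun u => Finset.univ.inf fun i : Fin k => edist u (a i.castSucc)) ≤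
        edist (a i) (a j)) ∧
    ∀ C : Finset V, C.card = k →
      (Finset.univ.sup fun u => Finset.univ.inf fun i : Fin k => edist u (a i.castSucc)) ≤
        2 * Finset.univ.sup fun u => C.inf fun v => edist u v := by
  set rA := (Finset.univ.sup fun u => Finset.univ.inf fun i : Fin k => edist u (a i.castSucc))
    with hrA
  have hsep : ∀ i j : Fin (k + 1), j < i → rA ≤ edist (a i) (a j) := by
    intro i j hji
    apply Finset.sup_le
    intro u _
    have hjk : j.val < k := lt_of_lt_of_le hji (Nat.lt_succ_iff.mp i.isLt)
    have hcast : ((⟨j.val, hjk⟩ : Fin k)).castSucc = j := Fin.ext rfl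
    calc (Finset.univ.inf fun i' : Fin k => edist u (a i'.castSucc))
        ≤ (Finset.univ.filter (fun j' => j' < i)).inf (fun j' => edist u (a j')) := by
          apply Finset.le_inf
          intro j' hj'
          simp only [Finset.mem_filter, Finset.mem_univ, true_and] at hj'
          have hj'k : j'.val < k := lt_of_lt_of_le hj' (Nat.lt_succ_iff.mp i.isLt)
          have hc : ((⟨j'.val, hj'k⟩ : Fin k)).castSucc = j' := Fin.ext rfl
          calc (Finset.univ.inf fun i' : Fin k => edist u (a i'.castSucc))
              ≤ edist u (a ((⟨j'.val, hj'k⟩ : Fin k).castSucc)) :=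
                Finset.inf_le (Finset.mem_univ _)
            _ = edist u (a j') := by rw [hc]
      _ ≤ (Finset.univ.filter (fun j' => j' < i)).inf (fun j' => edist (a i) (a j')) :=
          hgreedy i u
      _ ≤ edist (a i) (a j) := Finset.inf_le (by simp [hji])
  have hsep' : ∀ i j : Fin (k + 1), i ≠ j → rA ≤ edist (a i) (a j) := by
    intro i j hij
    rcases lt_or_gt_of_ne hij with h | h
    · rw [edist_comm]; exact hsep j i h
    · exact hsep i j h
  refine ⟨hsep', ?_⟩
  intro C hC
  set rstar := Finset.univ.sup fun u => C.inf fun v => edist u v with hrstar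
  have hCne : C.Nonempty := by rw [← Finset.card_pos, hC]; omega
  have hex : ∀ i : Fin (k + 1), ∃ v ∈ C, (C.inf fun v => edist (a i) v) = edist (a i) v :=
    fun i => Finset.exists_mem_eq_inf C hCne _
  choose f hf hfe using hex
  obtain ⟨i, -, j, -, hij, hfij⟩ :=
    Finset.exists_ne_map_eq_of_card_lt_of_maps_to
      (s := (Finset.univ : Finset (Fin (k + 1)))) (t := C)
      (by simp [hC]) (fun i _ => hf i)
  have h1 : ∀ m : Fin (k + 1), edist (a m) (f m) ≤ rstar := by
    intro m
    rw [← hfe m]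
    exact Finset.le_sup (f := fun u => C.inf fun v => edist u v) (Finset.mem_univ (a m))
  calc rA ≤ edist (a i) (a j) := hsep' i j hij
    _ ≤ edist (a i) (f i) + edist (f i) (a j) := edist_triangle _ _ _
    _ = edist (a i) (f i) + edist (a j) (f j) := by rw [hfij, edist_comm (f j) (a j)]
    _ ≤ rstar + rstar := add_le_add (h1 i) (h1 j)
    _ = 2 * rstar := (two_mul _).symm
end
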